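/- The generalized double Pareto density arises as a Gamma mixture of Laplace distributions: for α > 0, η > 0, and all x ∈ ℝ, ∫₀^∞ (λ/2)·exp(−λ|x|) · (η^α/Γ(α))·λ^{α−1}·exp(−η λ) dλ = (1/(2ξ))·(1 + |x|/(α ξ))^{−(α+1)}, where ξ = η/α. -/

import Mathlib

/-- The generalized double Pareto density as a Gamma mixture of Laplace densities:
`∫₀^∞ (λ/2)e^{−λ|x|} · Gamma(λ; α, η) dλ = (1/(2ξ)) (1 + |x|/(αξ))^{−(α+1)}`, `ξ = η/α`. -/
theorem gdp_gamma_mixture_of_laplace (α η : ℝ) (hα : 0 < α) (hη : 0 < η) (x : ℝ) :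
    ∫ l in Set.Ioi (0 : ℝ),
        (l / 2 * Real.exp (-l * |x|)) *
        (η ^ α / Real.Gamma α * l ^ (α - 1) * Real.exp (-η * l))
    = (1 / (2 * (η / α))) * (1 + |x| / (α * (η / α))) ^ (-(α + 1)) := by
  have hr : (0:ℝ) < η + |x| := by positivity
  have key : ∫ l in Set.Ioi (0 : ℝ),
        (l / 2 * Real.exp (-l * |x|)) *
        (η ^ α / Real.Gamma α * l ^ (α - 1) * Real.exp (-η * l))
      = η ^ α / Real.Gamma α / 2 *
        ∫ l in Set.Ioi (0:ℝ), l ^ ((α + 1) - 1) * Real.exp (-((η + |x|) * l)) := by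
    rw [← MeasureTheory.integral_const_mul]
    refine MeasureTheory.setIntegral_congr_fun measurableSet_Ioi (fun l hl => ?_)
    have hl0 : (0:ℝ) < l := hl
    have h1 : l ^ ((α + 1) - 1) = l ^ (α - 1) * l := by
      rw [show α + 1 - 1 = (α - 1) + 1 by ring, Real.rpow_add hl0, Real.rpow_one]
    have h2 : Real.exp (-((η + |x|) * l)) = Real.exp (-l * |x|) * Real.exp (-η * l) := by
      rw [← Real.exp_add]; ring_nf
    rw [h1, h2]; ring
  rw [key, Real.integral_rpow_mul_exp_neg_mul_Ioi (by linarith) hr,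
    Real.Gamma_add_one (ne_of_gt hα)]
  have hΓ : Real.Gamma α ≠ 0 := (Real.Gamma_pos_of_pos hα).ne'
  have hrw1 : (1 / (η + |x|)) ^ (α + 1) = (η + |x|) ^ (-(α + 1)) := by
    rw [one_div, Real.inv_rpow hr.le, ← Real.rpow_neg hr.le]
  have hrw2 : (1 + |x| / (α * (η / α))) = (η + |x|) / η := by
    field_simp
  rw [hrw1, hrw2, Real.div_rpow hr.le hη.le]
  have hηr : η ^ (-(α+1)) = (η ^ α * η)⁻¹ := by
    rw [Real.rpow_neg hη.le, Real.rpow_add hη, Real.rpow_one]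
  rw [hηr, div_inv_eq_mul]
  have hηα : (0:ℝ) < η ^ α := Real.rpow_pos_of_pos hη α
  field_simp
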